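/- Let C be a braided pivotal fusion category and C^rev the same category with reverse braiding c^rev_{X,Y} = c_{Y,X}^{-1}. Then for all simple objects X, Y: S^{rev,L,R}_{X,Y} = S^{R,R}_{Y,X*}, where S^{L,R}_{X,Y} = Tr^{L,R}_{X⊗Y}(c_{Y,X} ∘ c_{X,Y}) and S^{R,R}_{X,Y} = Tr^R_{X⊗Y}(c_{Y,X} ∘ c_{X,Y}). -/

import Mathlib

open CategoryTheory MonoidalCategory

noncomputable section

variable {C : Type*} [Category C] [MonoidalCategory C] [RightRigidCategory C]

/-- The (right) dual of an object. -/
abbrev rd (X : C) [HasRightDual X] : C := HasRightDual.rightDual X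

/-- The right quantum trace of `f : X ⟶ X` with respect to a pivotal structure `a`. -/
def qTrR (a : ∀ X : C, X ≅ rd (rd X)) {X : C} (f : X ⟶ X) : 𝟙_ C ⟶ 𝟙_ C :=
  η_ X (rd X) ≫ ((f ≫ (a X).hom) ▷ rd X) ≫ ε_ (rd X) (rd (rd X))

/-- The left quantum trace of `f : X ⟶ X` with respect to a pivotal structure `a`. -/
def qTrL (a : ∀ X : C, X ≅ rd (rd X)) {X : C} (f : X ⟶ X) : 𝟙_ C ⟶ 𝟙_ C :=
  η_ (rd X) (rd (rd X)) ≫ (rd X ◁ ((a X).inv ≫ f)) ≫ ε_ X (rd X)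

/-- The right partial trace `id_X ⊗ Tr^R_Y` of `f : X ⊗ Y ⟶ X ⊗ Y`. -/
def qPTrR (a : ∀ X : C, X ≅ rd (rd X)) {X Y : C} (f : X ⊗ Y ⟶ X ⊗ Y) : X ⟶ X :=
  (ρ_ X).inv ≫ (X ◁ η_ Y (rd Y)) ≫ (α_ X Y (rd Y)).inv ≫
    ((f ≫ (X ◁ (a Y).hom)) ▷ rd Y) ≫ (α_ X (rd (rd Y)) (rd Y)).hom ≫
    (X ◁ ε_ (rd Y) (rd (rd Y))) ≫ (ρ_ X).hom

variable [BraidedCategory C]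

/-- The entry `S^{R,R}_{X,Y} = Tr^R_X ((id_X ⊗ Tr^R_Y)(c_{Y,X} ∘ c_{X,Y}))` of the
`S`-matrix of `C`. -/
def SRR (a : ∀ X : C, X ≅ rd (rd X)) (X Y : C) : 𝟙_ C ⟶ 𝟙_ C :=
  qTrR a (qPTrR a ((β_ X Y).hom ≫ (β_ Y X).hom))

/-- The entry `S^{rev,L,R}_{X,Y} = Tr^L_X ((id_X ⊗ Tr^R_Y)(c^rev_{Y,X} ∘ c^rev_{X,Y}))` of the
mixed `S`-matrix of the reverse-braided category `C^rev`, computed with the same pivotal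
structure; here `c^rev_{X,Y} = c_{Y,X}⁻¹`. -/
def SrevLR (a : ∀ X : C, X ≅ rd (rd X)) (X Y : C) : 𝟙_ C ⟶ 𝟙_ C :=
  qTrL a (qPTrR a ((β_ Y X).inv ≫ (β_ X Y).inv))


section AuxBraided

private theorem my_mid (A B Y : C) :
    ((β_ Y A).hom ≫ (β_ A Y).hom) ▷ B =
      (α_ Y A B).hom ≫ (β_ Y (A ⊗ B)).hom ≫ (α_ A B Y).hom ≫
        A ◁ ((β_ Y B).inv ≫ (β_ B Y).inv) ≫ (α_ A B Y).inv ≫ (β_ (A ⊗ B) Y).hom ≫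
        (α_ Y A B).inv := by
  simp

open BraidedCategory in
private theorem my_core {A B Y Y' W : C} (n : 𝟙_ C ⟶ A ⊗ B) (e : A ⊗ B ⟶ 𝟙_ C)
    (m : 𝟙_ C ⟶ Y ⊗ Y') (w : Y ⟶ W) (e' : W ⊗ Y' ⟶ 𝟙_ C) :
    n ⊗≫ ((A ⊗ B) ◁ m) ⊗≫ (A ◁ (((β_ Y B).inv ≫ (β_ B Y).inv) ▷ Y')) ⊗≫
        ((A ⊗ B) ◁ (w ▷ Y' ≫ e')) ⊗≫ e =
    m ⊗≫ (Y ◁ (n ▷ Y')) ⊗≫ ((((β_ Y A).hom ≫ (β_ A Y).hom) ▷ B) ▷ Y') ⊗≫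
        (Y ◁ (e ▷ Y')) ⊗≫ (w ▷ Y' ≫ e') := by
  calc
    _ = 𝟙 (𝟙_ C) ⊗≫ (n ⊗ₘ m) ⊗≫ ((A ◁ ((β_ Y B).inv ≫ (β_ B Y).inv)) ▷ Y') ⊗≫
          (e ⊗ₘ (w ▷ Y' ≫ e')) ⊗≫ 𝟙 (𝟙_ C) := by
        rw [tensorHom_def n m, tensorHom_def' e (w ▷ Y' ≫ e')]; monoidal
    _ = m ⊗≫ ((n ▷ Y) ▷ Y') ⊗≫ ((A ◁ ((β_ Y B).inv ≫ (β_ B Y).inv)) ▷ Y') ⊗≫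
          ((e ▷ Y) ▷ Y') ⊗≫ (w ▷ Y' ≫ e') := by
        rw [tensorHom_def' n m, tensorHom_def e (w ▷ Y' ≫ e')]; monoidal
    _ = m ⊗≫ ((Y ◁ n ≫ (β_ Y (A ⊗ B)).hom) ▷ Y') ⊗≫
          ((A ◁ ((β_ Y B).inv ≫ (β_ B Y).inv)) ▷ Y') ⊗≫
          (((β_ (A ⊗ B) Y).hom ≫ Y ◁ e) ▷ Y') ⊗≫ (w ▷ Y' ≫ e') := by
        rw [braiding_naturality_right Y n, ← braiding_naturality_left e Y]
        rw [braiding_tensorUnit_right, braiding_tensorUnit_left]; monoidal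
    _ = _ := by rw [my_mid]; monoidal

end AuxBraided

/-- Let `C` be a braided pivotal fusion category and `C^rev` the same category with the reverse
braiding. Then for all simple objects `X`, `Y` one has `S^{rev,L,R}_{X,Y} = S^{R,R}_{Y,X*}`. -/
theorem Srev_eq_SRR_dual [Preadditive C]
    (a : ∀ X : C, X ≅ rd (rd X))
    (hnat : ∀ {X Y : C} (f : X ⟶ Y),
      f ≫ (a Y).hom = (a X).hom ≫ rightAdjointMate (rightAdjointMate f))
    (hmon : ∀ X : C, (a (rd X)).hom = rightAdjointMate (a X).inv)
    (X Y : C) (hX : Simple X) (hY : Simple Y) :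
    SrevLR a X Y = SRR a Y (rd X) := by
  dsimp only [SrevLR, SRR, qTrL, qTrR, qPTrR]
  rw [hmon X]
  calc
    _ = (η_ (rd X) (rd (rd X)) ≫ (rd X ◁ (a X).inv)) ⊗≫
          ((rd X ⊗ X) ◁ η_ Y (rd Y)) ⊗≫
          (rd X ◁ (((β_ Y X).inv ≫ (β_ X Y).inv) ▷ rd Y)) ⊗≫
          ((rd X ⊗ X) ◁ ((a Y).hom ▷ rd Y ≫ ε_ (rd Y) (rd (rd Y)))) ⊗≫ ε_ X (rd X) := by
        monoidal
    _ = η_ Y (rd Y) ⊗≫ (Y ◁ ((η_ (rd X) (rd (rd X)) ≫ (rd X ◁ (a X).inv)) ▷ rd Y)) ⊗≫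
          ((((β_ Y (rd X)).hom ≫ (β_ (rd X) Y).hom) ▷ X) ▷ rd Y) ⊗≫
          (Y ◁ (ε_ X (rd X) ▷ rd Y)) ⊗≫
          ((a Y).hom ▷ rd Y ≫ ε_ (rd Y) (rd (rd Y))) :=
        my_core _ _ _ _ _
    _ = η_ Y (rd Y) ⊗≫ (Y ◁ (η_ (rd X) (rd (rd X)) ▷ rd Y)) ⊗≫
          ((((Y ⊗ rd X) ◁ (a X).inv) ≫
            (((β_ Y (rd X)).hom ≫ (β_ (rd X) Y).hom) ▷ X)) ▷ rd Y) ⊗≫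
          (Y ◁ (ε_ X (rd X) ▷ rd Y)) ⊗≫
          ((a Y).hom ▷ rd Y ≫ ε_ (rd Y) (rd (rd Y))) := by
        monoidal
    _ = η_ Y (rd Y) ⊗≫ (Y ◁ (η_ (rd X) (rd (rd X)) ▷ rd Y)) ⊗≫
          (((((β_ Y (rd X)).hom ≫ (β_ (rd X) Y).hom) ▷ rd (rd X)) ≫
            ((Y ⊗ rd X) ◁ (a X).inv)) ▷ rd Y) ⊗≫
          (Y ◁ (ε_ X (rd X) ▷ rd Y)) ⊗≫
          ((a Y).hom ▷ rd Y ≫ ε_ (rd Y) (rd (rd Y))) := by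
        rw [whisker_exchange]
    _ = η_ Y (rd Y) ⊗≫ (Y ◁ (η_ (rd X) (rd (rd X)) ▷ rd Y)) ⊗≫
          ((((β_ Y (rd X)).hom ≫ (β_ (rd X) Y).hom) ▷ rd (rd X)) ▷ rd Y) ⊗≫
          (Y ◁ ((rd X ◁ (a X).inv ≫ ε_ X (rd X)) ▷ rd Y)) ⊗≫
          ((a Y).hom ▷ rd Y ≫ ε_ (rd Y) (rd (rd Y))) := by
        monoidal
    _ = η_ Y (rd Y) ⊗≫ (Y ◁ (η_ (rd X) (rd (rd X)) ▷ rd Y)) ⊗≫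
          ((((β_ Y (rd X)).hom ≫ (β_ (rd X) Y).hom) ▷ rd (rd X)) ▷ rd Y) ⊗≫
          (Y ◁ ((rightAdjointMate (a X).inv ▷ rd (rd X) ≫
            ε_ (rd (rd X)) (rd (rd (rd X)))) ▷ rd Y)) ⊗≫
          ((a Y).hom ▷ rd Y ≫ ε_ (rd Y) (rd (rd Y))) := by
        rw [rightAdjointMate_comp_evaluation]
    _ = _ := by monoidal

end
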